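/- Let α > 0 and L be the infinite matrix (viewed as a linear operator on eventually-zero or summable nonnegative sequences indexed by ℕ) with L₀ = (1, 1, 2^α, 3^α, 4^α, …), L₁ = (0, 1, 1, 1, 1, …), L₂ = (1, 1, 0, 0, …), and Lₖ = e_{k-1} (the shift) for k ≥ 3. If a = (a₀, a₁, a₂, …) is a sequence of positive reals with ∑_{k≥2} k^α aₖ < ∞ and L a = λ a for some λ > 1, then aₖ = λ^{2-k} a₂ for all k ≥ 3, a₁ = a₂ · λ/(λ-1)², and λ satisfies λ = (1/(λ-1))·∑_{k=2}^∞ k^α λ^{2-k} + λ²/(λ-1)³. -/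

import Mathlib

theorem stmt1 (α : ℝ) (hα : 0 < α) (a : ℕ → ℝ) (ha : ∀ k, 0 < a k)
    (hsum : Summable fun k : ℕ => ((k : ℝ) + 2) ^ α * a (k + 2))
    (lam : ℝ) (hlam : 1 < lam)
    (h0 : lam * a 0 = a 0 + a 1 + ∑' k : ℕ, ((k : ℝ) + 2) ^ α * a (k + 2))
    (h1 : lam * a 1 = a 1 + ∑' k : ℕ, a (k + 2))
    (h2 : lam * a 2 = a 0 + a 1)
    (hk : ∀ k, 3 ≤ k → lam * a k = a (k - 1)) :
    (∀ k : ℕ, 3 ≤ k → a k = lam ^ (2 - (k : ℤ)) * a 2) ∧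
    a 1 = a 2 * (lam / (lam - 1) ^ 2) ∧
    lam = (1 / (lam - 1)) *
        (∑' k : ℕ, ((k : ℝ) + 2) ^ α * lam ^ (-(k : ℤ)))
      + lam ^ 2 / (lam - 1) ^ 3 := by
  have hl0 : (0:ℝ) < lam := lt_trans one_pos hlam
  have hlne : lam ≠ 0 := ne_of_gt hl0
  have hl1 : lam - 1 ≠ 0 := sub_ne_zero.mpr (ne_of_gt hlam)
  have ha2 : a 2 ≠ 0 := ne_of_gt (ha 2)
  have hr0 : (0:ℝ) ≤ lam⁻¹ := by positivity
  have hr1 : lam⁻¹ < 1 := inv_lt_one_of_one_lt₀ hlam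
  have haux : ∀ k : ℕ, a (k + 2) = lam⁻¹ ^ k * a 2 := by
    intro k
    induction k with
    | zero => simp
    | succ n ih =>
      have h := hk (n + 3) (by omega)
      have hn : n + 3 - 1 = n + 2 := by omega
      rw [hn] at h
      have h3 : a (n + 3) = lam⁻¹ * a (n + 2) := by
        field_simp
        linarith [h]
      rw [show n + 1 + 2 = n + 3 from rfl, h3, ih, pow_succ]
      ring
  have hpart1 : ∀ k : ℕ, 3 ≤ k → a k = lam ^ (2 - (k : ℤ)) * a 2 := by
    intro k hk3
    obtain ⟨m, rfl⟩ : ∃ m, k = m + 2 := ⟨k - 2, by omega⟩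
    rw [haux m]
    congr 1
    have h4 : (2 - ((m + 2 : ℕ) : ℤ)) = -(m : ℤ) := by push_cast; ring
    rw [h4, zpow_neg, zpow_natCast, ← inv_pow]
  have hgeo : ∑' k : ℕ, lam⁻¹ ^ k = (1 - lam⁻¹)⁻¹ := tsum_geometric_of_lt_one hr0 hr1
  have hsumA : ∑' k : ℕ, a (k + 2) = (1 - lam⁻¹)⁻¹ * a 2 := by
    calc ∑' k : ℕ, a (k + 2) = ∑' k : ℕ, lam⁻¹ ^ k * a 2 := tsum_congr fun k => haux k
      _ = (∑' k : ℕ, lam⁻¹ ^ k) * a 2 := tsum_mul_right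
      _ = (1 - lam⁻¹)⁻¹ * a 2 := by rw [hgeo]
  rw [hsumA] at h1
  have hr' : 1 - lam⁻¹ ≠ 0 := by
    have : (0:ℝ) < 1 - lam⁻¹ := by linarith
    exact ne_of_gt this
  have part2 : a 1 = a 2 * (lam / (lam - 1) ^ 2) := by
    field_simp at h1 ⊢
    nlinarith [h1]
  have hT : (∑' k : ℕ, ((k:ℝ) + 2) ^ α * lam ^ (-(k:ℤ)))
      = (∑' k : ℕ, ((k:ℝ) + 2) ^ α * a (k + 2)) * (a 2)⁻¹ := by
    rw [← tsum_mul_right]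
    refine tsum_congr fun k => ?_
    rw [haux k, zpow_neg, zpow_natCast, ← inv_pow]
    field_simp
  refine ⟨hpart1, part2, ?_⟩
  rw [hT]
  set S := ∑' k : ℕ, ((k:ℝ) + 2) ^ α * a (k + 2) with hSdef
  have hS : S = (lam - 1) * (lam * a 2 - a 1) - a 1 := by
    have : a 0 = lam * a 2 - a 1 := by linarith [h2]
    nlinarith [h0, this]
  rw [hS, part2]
  field_simp
  ring
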